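/- For a finite collection U = {U_1, ..., U_{n-1}, V} of monomorphisms into X in C, writing U' = {U_1, ..., U_{n-1}} and U'' = {U_i ×_X V → V}, the presheaf ∪U is the pushout of ∪U' ← ∪U'' → V in the category of presheaves. -/

import Mathlib

open CategoryTheory CategoryTheory.Limits Simplicial SSet Opposite

/-- Presheaves of sets on a small category. -/
abbrev PSh (C : Type) [SmallCategory C] := Cᵒᵖ ⥤ Type

namespace Flasque

variable {C : Type} [SmallCategory C]

/-- The source of the union coequalizer diagram: the coproduct of the pairwise
fiber products (computed in presheaves). -/
noncomputable def pairObj {ι : Type} {A : ι → PSh C} {X : PSh C} (g : ∀ i, A i ⟶ X)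
    (p : ι × ι) : PSh C :=
  pullback (g p.1) (g p.2)

noncomputable def fstMap {ι : Type} {A : ι → PSh C} {X : PSh C} (g : ∀ i, A i ⟶ X) :
    (∐ pairObj g) ⟶ ∐ A :=
  Sigma.desc fun p => pullback.fst (g p.1) (g p.2) ≫ Sigma.ι A p.1

noncomputable def sndMap {ι : Type} {A : ι → PSh C} {X : PSh C} (g : ∀ i, A i ⟶ X) :
    (∐ pairObj g) ⟶ ∐ A :=
  Sigma.desc fun p => pullback.snd (g p.1) (g p.2) ≫ Sigma.ι A p.2

/-- The union `∪ U`: the coequalizer of `∐ U_i ×_X U_j ⇉ ∐ U_i`. -/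
noncomputable def unionPre {ι : Type} {A : ι → PSh C} {X : PSh C} (g : ∀ i, A i ⟶ X) : PSh C :=
  coequalizer (fstMap g) (sndMap g)

/-- The canonical map `∪ U ⟶ X`. -/
noncomputable def unionι {ι : Type} {A : ι → PSh C} {X : PSh C} (g : ∀ i, A i ⟶ X) :
    unionPre g ⟶ X :=
  coequalizer.desc (Sigma.desc g) (by
    apply Sigma.hom_ext
    intro p
    simp [fstMap, sndMap, pullback.condition]
    show (pullback.fst (g p.1) (g p.2) ≫ Sigma.ι A p.1) ≫ Sigma.desc g =
      (pullback.snd (g p.1) (g p.2) ≫ Sigma.ι A p.2) ≫ Sigma.desc g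
    simp [pullback.condition])

end Flasque

namespace Flasque

variable {C : Type} [SmallCategory C] {n : ℕ}
variable (U : Fin n → C) (X : C) (V : C)

/-- The enlarged family `{U_1, ..., U_{n-1}, V}`, indexed by `Option (Fin n)`
with `none` corresponding to `V`. -/
noncomputable def bigA : Option (Fin n) → PSh C := fun o => match o with
  | none => yoneda.obj V
  | some i => yoneda.obj (U i)

variable (g : ∀ i, U i ⟶ X) (h : V ⟶ X)

noncomputable def bigg : ∀ o, bigA U V o ⟶ yoneda.obj X := fun o => match o with
  | none => yoneda.map h
  | some i => yoneda.map (g i)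

/-- The family `U'' = {U_i ×_X V → V}` (fiber products computed in presheaves). -/
noncomputable def ddA (i : Fin n) : PSh C := pullback (yoneda.map (g i)) (yoneda.map h)

noncomputable def ddg (i : Fin n) : ddA U X V g h i ⟶ yoneda.obj V :=
  pullback.snd _ _

/-- The canonical map `∪U'' ⟶ ∪U'`. -/
noncomputable def unionDDtoUnion :
    unionPre (ddg U X V g h) ⟶ unionPre (fun i => yoneda.map (g i)) :=
  coequalizer.desc
    (Sigma.desc fun i => pullback.fst (yoneda.map (g i)) (yoneda.map h) ≫
      Sigma.ι (fun i => yoneda.obj (U i)) i ≫ coequalizer.π _ _)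
    (by
      apply Sigma.hom_ext; intro p
      have cond : (pullback.fst (ddg U X V g h p.1) (ddg U X V g h p.2) ≫
            pullback.fst (yoneda.map (g p.1)) (yoneda.map h)) ≫ yoneda.map (g p.1)
          = (pullback.snd (ddg U X V g h p.1) (ddg U X V g h p.2) ≫
            pullback.fst (yoneda.map (g p.2)) (yoneda.map h)) ≫ yoneda.map (g p.2) := by
        have c3 := pullback.condition (f := ddg U X V g h p.1) (g := ddg U X V g h p.2)
        erw [Category.assoc, Category.assoc, pullback.condition, pullback.condition,
          ← Category.assoc, ← Category.assoc]
        exact c3 =≫ yoneda.map h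
      set q : pairObj (ddg U X V g h) p ⟶ pairObj (fun i => yoneda.map (g i)) p :=
        pullback.lift _ _ cond with hq
      have rel := Sigma.ι (pairObj (fun i => yoneda.map (g i))) p ≫=
        coequalizer.condition (fstMap fun i => yoneda.map (g i)) (sndMap fun i => yoneda.map (g i))
      simp only [fstMap, sndMap, colimit.ι_desc_assoc, colimit.ι_desc, Cofan.mk_ι_app,
        Category.assoc] at rel ⊢
      have lhs : pullback.fst (ddg U X V g h p.1) (ddg U X V g h p.2) ≫
          pullback.fst (yoneda.map (g p.1)) (yoneda.map h) = q ≫ pullback.fst _ _ := by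
        rw [hq]; exact (pullback.lift_fst ..).symm
      have rhs : pullback.snd (ddg U X V g h p.1) (ddg U X V g h p.2) ≫
          pullback.fst (yoneda.map (g p.2)) (yoneda.map h) = q ≫ pullback.snd _ _ := by
        rw [hq]; exact (pullback.lift_snd ..).symm
      erw [Category.assoc, Category.assoc, Sigma.ι_desc, Sigma.ι_desc]
      exact (lhs =≫ _).trans ((Category.assoc _ _ _).trans ((q ≫= ((Category.assoc _ _ _).symm.trans
        (rel.trans (Category.assoc _ _ _)))).trans ((Category.assoc _ _ _).symm.trans (rhs =≫ _).symm))))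

/-- The canonical map `∪U' ⟶ ∪U`. -/
noncomputable def unionToBig :
    unionPre (fun i => yoneda.map (g i)) ⟶ unionPre (bigg U X V g h) :=
  coequalizer.desc
    (Sigma.desc fun i => Sigma.ι (bigA U V) (some i) ≫ coequalizer.π _ _)
    (by
      apply Sigma.hom_ext; intro p
      have h2 := Sigma.ι (pairObj (bigg U X V g h)) (some p.1, some p.2) ≫=
        coequalizer.condition (fstMap (bigg U X V g h)) (sndMap (bigg U X V g h))
      simp only [fstMap, sndMap, colimit.ι_desc_assoc, colimit.ι_desc, Cofan.mk_ι_app,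
        Category.assoc] at h2 ⊢
      erw [Category.assoc, Category.assoc, Sigma.ι_desc, Sigma.ι_desc]
      exact h2)

/-- The canonical map `V ⟶ ∪U`. -/
noncomputable def vToBig : yoneda.obj V ⟶ unionPre (bigg U X V g h) :=
  Sigma.ι (bigA U V) none ≫ coequalizer.π _ _

end Flasque


open Flasque in
/-- For a finite collection `U = {U_1, ..., U_{n-1}, V}` of monomorphisms
into `X` in `C`, writing `U' = {U_1, ..., U_{n-1}}` and `U'' = {U_i ×_X V → V}`,
the presheaf `∪U` is the pushout of `∪U' ← ∪U'' → V` in the category of presheaves. -/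
theorem flasque_union_isPushout {C : Type} [SmallCategory C] {n : ℕ}
    (U : Fin n → C) (X : C) (V : C) (g : ∀ i, U i ⟶ X) (h : V ⟶ X)
    (hg : ∀ i, Mono (g i)) (hh : Mono h) :
    IsPushout (unionDDtoUnion U X V g h) (unionι (ddg U X V g h))
      (unionToBig U X V g h) (vToBig U X V g h) := by
  -- the coequalizer relation in `∪U`
  have relBig : ∀ p : Option (Fin n) × Option (Fin n),
      pullback.fst (bigg U X V g h p.1) (bigg U X V g h p.2) ≫ Sigma.ι (bigA U V) p.1 ≫
          coequalizer.π (fstMap (bigg U X V g h)) (sndMap (bigg U X V g h))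
        = pullback.snd (bigg U X V g h p.1) (bigg U X V g h p.2) ≫ Sigma.ι (bigA U V) p.2 ≫
          coequalizer.π (fstMap (bigg U X V g h)) (sndMap (bigg U X V g h)) := by
    intro p
    have h2 := Sigma.ι (pairObj (bigg U X V g h)) p ≫=
      coequalizer.condition (fstMap (bigg U X V g h)) (sndMap (bigg U X V g h))
    simp only [fstMap, sndMap, Category.assoc] at h2
    erw [Sigma.ι_desc_assoc, Sigma.ι_desc_assoc] at h2
    exact (Category.assoc _ _ _).symm.trans (h2.trans (Category.assoc _ _ _))
  -- the coequalizer relation in `∪U'`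
  have relG : ∀ p : Fin n × Fin n,
      pullback.fst (yoneda.map (g p.1)) (yoneda.map (g p.2)) ≫
          Sigma.ι (fun i => yoneda.obj (U i)) p.1 ≫
          coequalizer.π (fstMap fun i => yoneda.map (g i)) (sndMap fun i => yoneda.map (g i))
        = pullback.snd (yoneda.map (g p.1)) (yoneda.map (g p.2)) ≫
          Sigma.ι (fun i => yoneda.obj (U i)) p.2 ≫
          coequalizer.π (fstMap fun i => yoneda.map (g i)) (sndMap fun i => yoneda.map (g i)) := by
    intro p
    have h2 := Sigma.ι (pairObj fun i => yoneda.map (g i)) p ≫=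
      coequalizer.condition (fstMap fun i => yoneda.map (g i)) (sndMap fun i => yoneda.map (g i))
    simp only [fstMap, sndMap, Category.assoc] at h2
    erw [Sigma.ι_desc_assoc, Sigma.ι_desc_assoc] at h2
    exact (Category.assoc _ _ _).symm.trans (h2.trans (Category.assoc _ _ _))
  have fstEqSnd : pullback.fst (yoneda.map h) (yoneda.map h)
      = pullback.snd (yoneda.map h) (yoneda.map h) := by
    rw [← cancel_mono (yoneda.map h)]
    exact pullback.condition
  -- component computations
  have L1 : ∀ (i : Fin n) {W : PSh C} (k : unionPre (fun i => yoneda.map (g i)) ⟶ W),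
      Sigma.ι (ddA U X V g h) i ≫
        coequalizer.π (fstMap (ddg U X V g h)) (sndMap (ddg U X V g h)) ≫
        unionDDtoUnion U X V g h ≫ k
      = pullback.fst (yoneda.map (g i)) (yoneda.map h) ≫
        Sigma.ι (fun i => yoneda.obj (U i)) i ≫
        coequalizer.π (fstMap fun i => yoneda.map (g i)) (sndMap fun i => yoneda.map (g i)) ≫
        k := by
    intro i W k
    have e : Sigma.ι (ddA U X V g h) i ≫
        coequalizer.π (fstMap (ddg U X V g h)) (sndMap (ddg U X V g h)) ≫
        unionDDtoUnion U X V g h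
      = pullback.fst (yoneda.map (g i)) (yoneda.map h) ≫
        Sigma.ι (fun i => yoneda.obj (U i)) i ≫
        coequalizer.π (fstMap fun i => yoneda.map (g i)) (sndMap fun i => yoneda.map (g i)) := by
      rw [unionDDtoUnion, coequalizer.π_desc, Sigma.ι_desc]
      rfl
    have := e =≫ k
    erw [Category.assoc, Category.assoc] at this; exact this
  have L2 : ∀ (i : Fin n) {W : PSh C} (k : yoneda.obj V ⟶ W),
      Sigma.ι (ddA U X V g h) i ≫
        coequalizer.π (fstMap (ddg U X V g h)) (sndMap (ddg U X V g h)) ≫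
        unionι (ddg U X V g h) ≫ k
      = pullback.snd (yoneda.map (g i)) (yoneda.map h) ≫ k := by
    intro i W k
    have e : Sigma.ι (ddA U X V g h) i ≫
        coequalizer.π (fstMap (ddg U X V g h)) (sndMap (ddg U X V g h)) ≫
        unionι (ddg U X V g h)
      = pullback.snd (yoneda.map (g i)) (yoneda.map h) := by
      rw [unionι, coequalizer.π_desc, Sigma.ι_desc, ddg]
    have := e =≫ k
    erw [Category.assoc, Category.assoc] at this; exact this
  have L3 : ∀ (i : Fin n) {W : PSh C} (k : unionPre (bigg U X V g h) ⟶ W),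
      Sigma.ι (fun i => yoneda.obj (U i)) i ≫
        coequalizer.π (fstMap fun i => yoneda.map (g i)) (sndMap fun i => yoneda.map (g i)) ≫
        unionToBig U X V g h ≫ k
      = Sigma.ι (bigA U V) (some i) ≫
        coequalizer.π (fstMap (bigg U X V g h)) (sndMap (bigg U X V g h)) ≫ k := by
    intro i W k
    have e : Sigma.ι (fun i => yoneda.obj (U i)) i ≫
        coequalizer.π (fstMap fun i => yoneda.map (g i)) (sndMap fun i => yoneda.map (g i)) ≫
        unionToBig U X V g h
      = Sigma.ι (bigA U V) (some i) ≫
        coequalizer.π (fstMap (bigg U X V g h)) (sndMap (bigg U X V g h)) := by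
      rw [unionToBig, coequalizer.π_desc, Sigma.ι_desc]
      rfl
    have := e =≫ k
    erw [Category.assoc, Category.assoc] at this; exact this
  -- commutativity of the square
  have w : unionDDtoUnion U X V g h ≫ unionToBig U X V g h
      = unionι (ddg U X V g h) ≫ vToBig U X V g h := by
    apply coequalizer.hom_ext
    apply Sigma.hom_ext
    intro i
    erw [L1 i (unionToBig U X V g h), L2 i (vToBig U X V g h)]
    have e3 := L3 i (𝟙 _)
    erw [Category.comp_id, Category.comp_id] at e3
    erw [e3, vToBig]
    have e := relBig (some i, none)
    have e2 : pullback.fst (yoneda.map (g i)) (yoneda.map h) ≫ Sigma.ι (bigA U V) (some i) ≫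
          coequalizer.π (fstMap (bigg U X V g h)) (sndMap (bigg U X V g h))
        = pullback.snd (yoneda.map (g i)) (yoneda.map h) ≫ Sigma.ι (bigA U V) none ≫
          coequalizer.π (fstMap (bigg U X V g h)) (sndMap (bigg U X V g h)) := e
    exact e2
  refine IsPushout.of_isColimit (PushoutCocone.IsColimit.mk w (fun s => ?_) ?_ ?_ ?_)
  case refine_1 =>
    refine coequalizer.desc (Sigma.desc fun o =>
      match o with
      | none => s.inr
      | some i => Sigma.ι (fun i => yoneda.obj (U i)) i ≫
          coequalizer.π (fstMap fun i => yoneda.map (g i)) (sndMap fun i => yoneda.map (g i)) ≫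
          s.inl) ?_
    have key : ∀ i : Fin n,
        pullback.fst (yoneda.map (g i)) (yoneda.map h) ≫
            Sigma.ι (fun i => yoneda.obj (U i)) i ≫
            coequalizer.π (fstMap fun i => yoneda.map (g i)) (sndMap fun i => yoneda.map (g i)) ≫
            s.inl
          = pullback.snd (yoneda.map (g i)) (yoneda.map h) ≫ s.inr := by
      intro i
      have h2 := Sigma.ι (ddA U X V g h) i ≫=
        (coequalizer.π (fstMap (ddg U X V g h)) (sndMap (ddg U X V g h)) ≫= s.condition)
      erw [L1 i s.inl, L2 i s.inr] at h2
      exact h2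
    apply Sigma.hom_ext
    rintro ⟨a | i, b | j⟩ <;>
      simp only [fstMap, sndMap] <;> erw [Sigma.ι_desc_assoc, Sigma.ι_desc_assoc] <;>
      erw [Category.assoc, Category.assoc, Sigma.ι_desc]
    · -- (none, none)
      have e : pullback.fst (bigg U X V g h none) (bigg U X V g h none)
          = pullback.snd (bigg U X V g h none) (bigg U X V g h none) := fstEqSnd
      erw [e]
    · -- (none, some j)
      erw [Sigma.ι_desc]
      show pullback.fst (yoneda.map h) (yoneda.map (g j)) ≫ s.inr
        = pullback.snd (yoneda.map h) (yoneda.map (g j)) ≫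
          Sigma.ι (fun i => yoneda.obj (U i)) j ≫
          coequalizer.π (fstMap fun i => yoneda.map (g i)) (sndMap fun i => yoneda.map (g i)) ≫
          s.inl
      rw [← cancel_epi (pullbackSymmetry (yoneda.map (g j)) (yoneda.map h)).hom,
        pullbackSymmetry_hom_comp_fst_assoc, pullbackSymmetry_hom_comp_snd_assoc]
      exact (key j).symm
    · -- (some i, none)
      erw [Sigma.ι_desc]
      exact key i
    · -- (some i, some j)
      erw [Sigma.ι_desc]
      have t := relG (i, j) =≫ s.inl
      simp only [Category.assoc] at t
      exact t
  case refine_2 =>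
    intro s
    apply coequalizer.hom_ext
    apply Sigma.hom_ext
    intro i
    erw [L3 i, coequalizer.π_desc, Sigma.ι_desc]
    rfl
  case refine_3 =>
    intro s
    show (Sigma.ι (bigA U V) none ≫ _) ≫ _ = _
    erw [Category.assoc, coequalizer.π_desc, Sigma.ι_desc]
  case refine_4 =>
    intro s m hm1 hm2
    apply coequalizer.hom_ext
    apply Sigma.hom_ext
    rintro (_ | i)
    · have t := hm2
      rw [vToBig] at t
      erw [Category.assoc] at t
      erw [t, coequalizer.π_desc, Sigma.ι_desc]
    · have t2 := Sigma.ι (fun i => yoneda.obj (U i)) i ≫=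
        (coequalizer.π (fstMap fun i => yoneda.map (g i))
          (sndMap fun i => yoneda.map (g i)) ≫= hm1)
      erw [← L3 i m, t2, coequalizer.π_desc, Sigma.ι_desc]
      rfl
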